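/- The general tensor product is associative: for tensors 𝔸, 𝔹, ℂ of dimension n with orders m+1, k+1, r+1 respectively (m,k,r ≥ 1), we have 𝔸(𝔹ℂ) = (𝔸𝔹)ℂ. -/
import Mathlib


open scoped BigOperators

noncomputable section

/-- An "order (1 + |α|)" tensor of dimension `|I|` over `R`: entries indexed by a
head index in `I` and a tail of indices `α → I`. -/
abbrev Tensor (R I α : Type) : Type := I → (α → I) → R

/-- The general tensor product: `(A*B)_{i α₁ ⋯ α_m} = ∑ a_{i i₂ ⋯} ∏ b_{i_j α_j}`. -/
def tmul {R I α β : Type} [CommSemiring R] [Fintype I] [DecidableEq α] [Fintype α]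
    (A : Tensor R I α) (B : Tensor R I β) : Tensor R I (α × β) :=
  fun i f => ∑ t : α → I, A i t * ∏ j : α, B (t j) (fun b => f (j, b))

/-- The general tensor product of a tensor with a vector (an order-1 tensor). -/
def tapp {R I α : Type} [CommSemiring R] [Fintype I] [DecidableEq α] [Fintype α]
    (A : Tensor R I α) (x : I → R) : I → R :=
  fun i => ∑ t : α → I, A i t * ∏ j : α, x (t j)

/-- The general tensor product `P * A` where `P` is a matrix (an order-2 tensor). -/
def matMulT {R I α : Type} [CommSemiring R] [Fintype I]
    (P : Matrix I I R) (A : Tensor R I α) : Tensor R I α :=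
  fun i f => ∑ j : I, P i j * A j f

/-- The general tensor product `A * Q` where `Q` is a matrix (an order-2 tensor). -/
def tMulMat {R I α : Type} [CommSemiring R] [Fintype I] [DecidableEq α] [Fintype α]
    (A : Tensor R I α) (Q : Matrix I I R) : Tensor R I α :=
  fun i f => ∑ t : α → I, A i t * ∏ j : α, Q (t j) (f j)

/-- The unit tensor `𝕀`: entries `1` exactly on the diagonal. -/
def unitT (R I α : Type) [CommSemiring R] [DecidableEq I] [Fintype α] [DecidableEq α] :
    Tensor R I α :=
  fun i f => if ∀ j, f j = i then 1 else 0

/-- The direct product of two tensors of the same order. -/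
def dprod {R I J α : Type} [CommSemiring R]
    (A : Tensor R I α) (B : Tensor R J α) : Tensor R (I × J) α :=
  fun p f => A p.1 (fun j => (f j).1) * B p.2 (fun j => (f j).2)

end

/-- associativity of the general tensor product. Here a tensor with
tail index type `Fin m` has order `m + 1`. -/
theorem tmul_assoc (n m k r : ℕ) (hm : 1 ≤ m) (hk : 1 ≤ k) (hr : 1 ≤ r)
    (A : Tensor ℂ (Fin n) (Fin m)) (B : Tensor ℂ (Fin n) (Fin k))
    (C : Tensor ℂ (Fin n) (Fin r)) :
    ∀ (i : Fin n) (f : Fin m × Fin k × Fin r → Fin n),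
      tmul A (tmul B C) i f = tmul (tmul A B) C i (fun p => f (p.1.1, p.1.2, p.2)) := by
  intro i f
  simp only [tmul]
  have L : ∀ t : Fin m → Fin n,
      (∏ j : Fin m, ∑ s : Fin k → Fin n, B (t j) s * ∏ l : Fin k, C (s l) (fun b => f (j, l, b)))
      = ∑ S : Fin m → (Fin k → Fin n), ∏ j : Fin m,
          (B (t j) (S j) * ∏ l : Fin k, C (S j l) (fun b => f (j, l, b))) := by
    intro t
    rw [← Fintype.piFinset_univ, Finset.prod_univ_sum]
    simp [Fintype.piFinset_univ]
  simp_rw [L, Finset.mul_sum, Finset.prod_mul_distrib, Finset.sum_mul]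
  rw [Finset.sum_comm]
  rw [← Equiv.sum_comp (Equiv.curry (Fin m) (Fin k) (Fin n)).symm]
  congr 1; ext S; congr 1; ext s
  rw [Fintype.prod_prod_type]
  simp [Equiv.curry, mul_assoc]
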